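/- Let r ≥ 2 and let k ∈ ℕ^r be of the form (k, 1, ..., 1, 2, 1, ..., 1) (a 2 in some position n with 2 ≤ n ≤ r and first entry k) or its reverse. Then a_r(k) ≥ k^r/(r−1)! and (2/r)·L(k−𝟙) ≤ k + r, where a_r is the Weyl dimension polynomial and L(k) := (1/2)·Σ_{j=1}^r j(r+1−j)k_j. -/

import Mathlib

open Finset

/-- `h_r(y) = ∏_{1 ≤ ℓ ≤ j ≤ r} (y_ℓ + ⋯ + y_j)`. -/
noncomputable def hpoly (r : ℕ) (y : Fin r → ℝ) : ℝ :=
  ∏ p ∈ Finset.univ.filter (fun p : Fin r × Fin r => p.1 ≤ p.2),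
    ∑ i ∈ Finset.Icc p.1 p.2, y i

/-- `c_r = r!(r-1)!⋯1!`. -/
def crconst (r : ℕ) : ℕ := ∏ i ∈ Finset.range r, Nat.factorial (i + 1)

/-- The Weyl dimension polynomial `a_r(k) = h_r(k)/c_r`. -/
noncomputable def apoly (r : ℕ) (y : Fin r → ℝ) : ℝ := hpoly r y / crconst r

/-- The height function `L(k) = (1/2) ∑_{j=1}^r j(r+1-j) k_j` (here `j` is 1-indexed). -/
noncomputable def Lfun (r : ℕ) (k : Fin r → ℝ) : ℝ :=
  (1 / 2) * ∑ j : Fin r, ((j : ℕ) + 1 : ℝ) * ((r : ℝ) - (j : ℕ)) * k j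

/- ### Auxiliary material -/

def f1 (K nn ℓ j : ℕ) : ℕ :=
  (j + 1 - ℓ) + (K - 1) * (if ℓ = 0 then 1 else 0) + (if ℓ ≤ nn ∧ nn ≤ j then 1 else 0)

def f2 (m K nn ℓ j : ℕ) : ℕ :=
  (j + 1 - ℓ) + (K - 1) * (if j = m+1 then 1 else 0) + (if ℓ ≤ nn ∧ nn ≤ j then 1 else 0)

lemma prodfac (t : ℕ) : ∏ i ∈ range t, (i+1) = t.factorial := by
  induction t with
  | zero => simp
  | succ n ih => rw [prod_range_succ, ih, Nat.factorial_succ]; ring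

lemma prodfac2 (t : ℕ) : ∏ i ∈ range t, (i+2) = (t+1).factorial := by
  induction t with
  | zero => simp
  | succ n ih =>
    rw [prod_range_succ, ih, show (n+1+1).factorial = (n+1+1)*(n+1).factorial from Nat.factorial_succ _]; ring

lemma prodfac3 (t : ℕ) : 2 * ∏ i ∈ range t, (i+3) = (t+2).factorial := by
  induction t with
  | zero => simp [Nat.factorial]
  | succ n ih =>
    rw [prod_range_succ, ← mul_assoc, ih, show (n+1+2).factorial = (n+1+2)*(n+2).factorial from Nat.factorial_succ _]; ring

lemma filter_le_range (r ℓ : ℕ) : (range r).filter (fun j => ℓ ≤ j) = Ico ℓ r := by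
  ext j; simp [mem_filter, mem_range, mem_Ico, and_comm]

lemma filter_lt_range (r t : ℕ) (h : t ≤ r) : (range r).filter (fun j => j < t) = range t := by
  ext j; simp only [mem_filter, mem_range]; omega

lemma ite_to_Ico (r ℓ : ℕ) (g : ℕ → ℕ) :
    ∏ j ∈ range r, (if ℓ ≤ j then g j else 1) = ∏ j ∈ Ico ℓ r, g j := by
  rw [← filter_le_range r ℓ, prod_filter]

lemma rowbase (ℓ m : ℕ) : ∏ j ∈ Ico (ℓ+1) (m+2), (j - ℓ) = (m + 1 - ℓ).factorial := by
  rw [Finset.prod_Ico_eq_prod_range]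
  have h : ∀ i ∈ range (m + 2 - (ℓ+1)), (ℓ + 1 + i - ℓ) = i + 1 := by intro i hi; omega
  rw [Finset.prod_congr rfl h, prodfac]
  congr 1; omega

lemma core (m K t : ℕ) (hK : 1 ≤ K) (h2 : t ≤ m) :
    K^(m+2) * crconst (m+2) ≤ (m+1).factorial *
      ∏ ℓ ∈ range (m+2), ∏ j ∈ range (m+2), (if ℓ ≤ j then f1 K (t+1) ℓ j else 1) := by
  set A : ℕ → ℕ := fun ℓ => ∏ j ∈ range (m+2), (if ℓ ≤ j then f1 K (t+1) ℓ j else 1) with hA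
  have hsplit : ∏ ℓ ∈ range (m+2), A ℓ = (∏ ℓ ∈ range (m+1), A (ℓ+1)) * A 0 :=
    Finset.prod_range_succ' A (m+1)
  have hA0 : K^(m+2) ≤ A 0 := by
    have e : A 0 = ∏ j ∈ Ico 0 (m+2), f1 K (t+1) 0 j := ite_to_Ico (m+2) 0 _
    have e2 : K^(m+2) = ∏ _j ∈ Ico 0 (m+2), K := by
      rw [prod_const, Nat.card_Ico]; norm_num
    rw [e, e2]
    refine Finset.prod_le_prod' ?_
    intro j hj
    simp only [f1, if_pos rfl]
    split_ifs <;> omega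
  have hrowA : ∀ ℓ : ℕ, A (ℓ+1) = ∏ j ∈ Ico (ℓ+1) (m+2),
      ((j - ℓ) + (if ℓ+1 ≤ t+1 ∧ t+1 ≤ j then 1 else 0)) := by
    intro ℓ
    have e : A (ℓ+1) = ∏ j ∈ Ico (ℓ+1) (m+2), f1 K (t+1) (ℓ+1) j := ite_to_Ico (m+2) (ℓ+1) _
    rw [e]
    refine Finset.prod_congr rfl ?_
    intro j hj
    simp only [f1]
    rw [if_neg (by omega : ¬ (ℓ+1 = 0)), mul_zero, add_zero]
    congr 1
    omega
  have hrow : ∀ ℓ ∈ range (m+1),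
      ((if ℓ < t then t + 2 - ℓ else 1) * (if ℓ = t then (m+1-t)+1 else 1)) * (m+1-ℓ).factorial
        ≤ (if ℓ < t then t + 1 - ℓ else 1) * A (ℓ+1) := by
    intro ℓ hl
    rw [mem_range] at hl
    rw [hrowA ℓ]
    rcases lt_trichotomy ℓ t with hc | hc | hc
    · rw [if_pos hc, if_pos hc, if_neg (show ¬ ℓ = t by omega), mul_one]
      have hnmem : t+1 ∈ Ico (ℓ+1) (m+2) := by rw [mem_Ico]; omega
      set P := ∏ j ∈ (Ico (ℓ+1) (m+2)).erase (t+1), (j - ℓ) with hP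
      have hbase : (m+1-ℓ).factorial = (t + 1 - ℓ) * P := by
        rw [← rowbase ℓ m, ← Finset.mul_prod_erase _ _ hnmem]
      have hlow : (t + 1 - ℓ + 1) * P ≤
          ∏ j ∈ Ico (ℓ+1) (m+2), ((j - ℓ) + (if ℓ+1 ≤ t+1 ∧ t+1 ≤ j then 1 else 0)) := by
        have e : (t + 1 - ℓ + 1) * P =
            ∏ j ∈ Ico (ℓ+1) (m+2), ((j - ℓ) + (if j = t+1 then 1 else 0)) := by
          rw [← Finset.mul_prod_erase _ _ hnmem, if_pos rfl]
          have e' : ∏ j ∈ (Ico (ℓ+1) (m+2)).erase (t+1), ((j - ℓ) + (if j = t+1 then 1 else 0))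
              = P := by
            refine Finset.prod_congr rfl ?_
            intro j hj
            rw [if_neg (Finset.ne_of_mem_erase hj), add_zero]
          rw [e']
        rw [e]
        refine Finset.prod_le_prod' ?_
        intro j hj
        rw [mem_Ico] at hj
        split_ifs <;> omega
      have harr : t + 1 - ℓ + 1 = t + 2 - ℓ := by omega
      rw [hbase]
      calc (t+2-ℓ) * ((t + 1 - ℓ) * P) = (t + 1 - ℓ) * ((t + 1 - ℓ + 1) * P) := by
            rw [harr]; ring
        _ ≤ (t+1-ℓ) * ∏ j ∈ Ico (ℓ+1) (m+2), ((j - ℓ) + (if ℓ+1 ≤ t+1 ∧ t+1 ≤ j then 1 else 0)) :=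
            Nat.mul_le_mul le_rfl hlow
    · have hnlt : ¬ ℓ < t := by omega
      rw [if_neg hnlt, if_pos hc, if_neg hnlt, one_mul, one_mul]
      have e : ∏ j ∈ Ico (ℓ+1) (m+2), ((j - ℓ) + (if ℓ+1 ≤ t+1 ∧ t+1 ≤ j then 1 else 0))
          = ∏ i ∈ range (m+1-ℓ), (i + 2) := by
        rw [Finset.prod_Ico_eq_prod_range]
        have hcard : m + 2 - (ℓ+1) = m+1-ℓ := by omega
        rw [hcard]
        refine Finset.prod_congr rfl ?_
        intro i hi
        rw [if_pos (by omega)]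
        omega
      rw [e, prodfac2]
      rw [show (m+1-ℓ+1).factorial = (m+1-ℓ+1) * (m+1-ℓ).factorial from Nat.factorial_succ _]
      have : m + 1 - t = m + 1 - ℓ := by omega
      rw [this]
    · have hnlt : ¬ ℓ < t := by omega
      rw [if_neg hnlt, if_neg (show ¬ ℓ = t by omega), if_neg hnlt, one_mul, one_mul, one_mul]
      have e : ∏ j ∈ Ico (ℓ+1) (m+2), ((j - ℓ) + (if ℓ+1 ≤ t+1 ∧ t+1 ≤ j then 1 else 0))
          = ∏ j ∈ Ico (ℓ+1) (m+2), (j - ℓ) := by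
        refine Finset.prod_congr rfl ?_
        intro j hj
        rw [if_neg (by omega), add_zero]
      rw [e, rowbase ℓ m]
  have hmul := Finset.prod_le_prod' hrow
  simp only [Finset.prod_mul_distrib] at hmul
  have e1 : ∏ ℓ ∈ range (m+1), (if ℓ < t then t + 1 - ℓ else 1) = (t+1).factorial := by
    rw [← Finset.prod_filter, filter_lt_range _ _ (by omega)]
    rw [← Finset.prod_range_reflect (fun i => t + 1 - i) t]
    have ee : ∀ j ∈ range t, t + 1 - (t - 1 - j) = j + 2 := by
      intro j hj; rw [mem_range] at hj; omega
    rw [Finset.prod_congr rfl ee, prodfac2]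
  have e2 : 2 * ∏ ℓ ∈ range (m+1), (if ℓ < t then t + 2 - ℓ else 1) = (t+2).factorial := by
    rw [← Finset.prod_filter, filter_lt_range _ _ (by omega)]
    rw [← Finset.prod_range_reflect (fun i => t + 2 - i) t]
    have ee : ∀ j ∈ range t, t + 2 - (t - 1 - j) = j + 3 := by
      intro j hj; rw [mem_range] at hj; omega
    rw [Finset.prod_congr rfl ee, prodfac3]
  have e3 : ∏ ℓ ∈ range (m+1), (if ℓ = t then (m+1-t)+1 else 1) = (m+1-t)+1 := by
    rw [Finset.prod_ite_eq' (range (m+1)) t (fun _ => (m+1-t)+1),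
      if_pos (mem_range.mpr (by omega))]
  have e4 : ∏ ℓ ∈ range (m+1), (m+1-ℓ).factorial = crconst (m+1) := by
    rw [← Finset.prod_range_reflect (fun i => (m+1-i).factorial) (m+1), crconst]
    have ee : ∀ j ∈ range (m+1), (m + 1 - 1 - j) = m - j := by
      intro j hj; omega
    rw [Finset.prod_congr rfl (fun j hj => by rw [ee j hj])]
    refine Finset.prod_congr rfl ?_
    intro j hj
    rw [mem_range] at hj
    congr 1
    omega
  rw [e1, e3, e4] at hmul
  have key : (m+2) * crconst (m+1) ≤ ∏ ℓ ∈ range (m+1), A (ℓ+1) := by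
    refine Nat.le_of_mul_le_mul_left ?_ (show 0 < 2 * (t+1).factorial by positivity)
    have harith : 2*(m+2) ≤ (t+2)*((m+1-t)+1) := by
      obtain ⟨u, rfl⟩ : ∃ u, m = t + u := ⟨m - t, by omega⟩
      have hu : t + u + 1 - t = u + 1 := by omega
      rw [hu]
      nlinarith
    calc 2 * (t+1).factorial * ((m+2) * crconst (m+1))
        = (t+1).factorial * (2*(m+2)) * crconst (m+1) := by ring
      _ ≤ (t+1).factorial * ((t+2)*((m+1-t)+1)) * crconst (m+1) :=
          Nat.mul_le_mul (Nat.mul_le_mul le_rfl harith) le_rfl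
      _ = (2 * ∏ ℓ ∈ range (m+1), (if ℓ < t then t + 2 - ℓ else 1)) * ((m+1-t)+1)
            * crconst (m+1) := by
          rw [e2, show (t+2).factorial = (t+2) * (t+1).factorial from Nat.factorial_succ _]
          ring
      _ = 2 * ((∏ ℓ ∈ range (m+1), (if ℓ < t then t + 2 - ℓ else 1)) * ((m+1-t)+1)
            * crconst (m+1)) := by ring
      _ ≤ 2 * ((t+1).factorial * ∏ ℓ ∈ range (m+1), A (ℓ+1)) := Nat.mul_le_mul le_rfl hmul
      _ = 2 * (t+1).factorial * ∏ ℓ ∈ range (m+1), A (ℓ+1) := by ring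
  have hsplitc : crconst (m+2) = crconst (m+1) * ((m+2) * (m+1).factorial) := by
    rw [crconst, Finset.prod_range_succ, ← crconst]
    congr 1
  calc K^(m+2) * crconst (m+2)
      = (m+1).factorial * (((m+2) * crconst (m+1)) * K^(m+2)) := by rw [hsplitc]; ring
    _ ≤ (m+1).factorial * ((∏ ℓ ∈ range (m+1), A (ℓ+1)) * A 0) :=
        Nat.mul_le_mul le_rfl (Nat.mul_le_mul key hA0)
    _ = (m+1).factorial * ∏ ℓ ∈ range (m+2), A ℓ := by rw [hsplit]

lemma bridge (r : ℕ) (g : ℕ → ℕ → ℕ) :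
    ∏ p ∈ univ.filter (fun p : Fin r × Fin r => p.1 ≤ p.2), g p.1.val p.2.val
    = ∏ ℓ ∈ range r, ∏ j ∈ range r, if ℓ ≤ j then g ℓ j else 1 := by
  rw [Finset.prod_filter, ← Finset.univ_product_univ, Finset.prod_product]
  rw [← Fin.prod_univ_eq_prod_range (fun ℓ => ∏ j ∈ range r, if ℓ ≤ j then g ℓ j else 1) r]
  refine Finset.prod_congr rfl ?_
  intro ℓ _
  rw [← Fin.prod_univ_eq_prod_range (fun j => if ℓ.val ≤ j then g ℓ.val j else 1) r]
  refine Finset.prod_congr rfl ?_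
  intro j _
  exact if_congr Fin.le_def rfl rfl

lemma reflect2 (r : ℕ) (g h : ℕ → ℕ → ℕ)
    (hg : ∀ ℓ j, ℓ ≤ j → j < r → g (r-1-j) (r-1-ℓ) = h ℓ j) :
    ∏ ℓ ∈ range r, ∏ j ∈ range r, (if ℓ ≤ j then g ℓ j else 1)
    = ∏ ℓ ∈ range r, ∏ j ∈ range r, (if ℓ ≤ j then h ℓ j else 1) := by
  have step1 : ∏ ℓ ∈ range r, ∏ j ∈ range r, (if ℓ ≤ j then g ℓ j else 1)
      = ∏ ℓ ∈ range r, ∏ j ∈ range r,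
          (if r-1-ℓ ≤ r-1-j then g (r-1-ℓ) (r-1-j) else 1) := by
    rw [← Finset.prod_range_reflect
      (fun ℓ => ∏ j ∈ range r, if ℓ ≤ j then g ℓ j else 1) r]
    refine Finset.prod_congr rfl ?_
    intro ℓ hℓ
    rw [← Finset.prod_range_reflect
      (fun j => if r - 1 - ℓ ≤ j then g (r-1-ℓ) j else 1) r]
  rw [step1, Finset.prod_comm]
  refine Finset.prod_congr rfl ?_
  intro ℓ hℓ
  refine Finset.prod_congr rfl ?_
  intro j hj
  rw [mem_range] at hℓ hj
  rcases le_or_gt ℓ j with hle | hlt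
  · rw [if_pos (by omega), if_pos hle, hg ℓ j hle hj]
  · rw [if_neg (by omega), if_neg (by omega)]

lemma sum_icc (m : ℕ) (v : Fin (m+2) → ℕ) (K : ℕ) (hK : 1 ≤ K) (a n : Fin (m+2)) (han : n ≠ a)
    (hvf : ∀ i, v i = if i = a then K else if i = n then 2 else 1) (p q : Fin (m+2)) :
    ∑ i ∈ Icc p q, v i
      = (q.val + 1 - p.val) + (K - 1) * (if p ≤ a ∧ a ≤ q then 1 else 0)
        + (if p ≤ n ∧ n ≤ q then 1 else 0) := by
  have hv' : ∀ i, v i = 1 + ((K-1) * (if i = a then 1 else 0) + (if i = n then 1 else 0)) := by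
    intro i
    rw [hvf i]
    rcases eq_or_ne i a with rfl | h0
    · rw [if_pos rfl, if_pos rfl, if_neg (fun h : i = n => han h.symm)]
      omega
    · rw [if_neg h0, if_neg h0]
      split_ifs <;> omega
  rw [Finset.sum_congr rfl (fun i _ => hv' i), Finset.sum_add_distrib, Finset.sum_const,
    Finset.sum_add_distrib, ← Finset.mul_sum,
    Finset.sum_ite_eq' (Icc p q) a (fun _ => 1), Finset.sum_ite_eq' (Icc p q) n (fun _ => 1),
    smul_eq_mul, mul_one, Fin.card_Icc]
  simp only [Finset.mem_Icc]
  ring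

lemma crconst_pos (r : ℕ) : 0 < crconst r :=
  Finset.prod_pos (fun i _ => Nat.factorial_pos _)

/-- Lemma 5.3: with `r = m+2`, for `v = (K,1,…,1,2,1,…,1)` or its reverse
`(1,…,1,2,1,…,1,K)`, one has `a_r(v) ≥ K^r/(r-1)!` and `(2/r) L(v-𝟙) ≤ K + r`. -/
theorem stmt15 (m : ℕ) (K : ℕ) (hK : 1 ≤ K) (v : Fin (m + 2) → ℕ)
    (hv : (∃ n : Fin (m + 2), n ≠ 0 ∧
            ∀ i, v i = if i = 0 then K else if i = n then 2 else 1) ∨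
          (∃ n : Fin (m + 2), n ≠ Fin.last (m + 1) ∧
            ∀ i, v i = if i = Fin.last (m + 1) then K else if i = n then 2 else 1)) :
    (K : ℝ) ^ (m + 2) / (Nat.factorial (m + 1)) ≤ apoly (m + 2) (fun i => (v i : ℝ)) ∧
    2 / ((m : ℝ) + 2) * Lfun (m + 2) (fun i => (v i : ℝ) - 1) ≤ (K : ℝ) + (m + 2) := by
  constructor
  · -- the dimension bound
    suffices h : K^(m+2) * crconst (m+2) ≤ (m+1).factorial *
        ∏ p ∈ univ.filter (fun p : Fin (m+2) × Fin (m+2) => p.1 ≤ p.2),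
          ∑ i ∈ Icc p.1 p.2, v i by
      have hcast : hpoly (m+2) (fun i => (v i : ℝ))
          = ((∏ p ∈ univ.filter (fun p : Fin (m+2) × Fin (m+2) => p.1 ≤ p.2),
              ∑ i ∈ Icc p.1 p.2, v i : ℕ) : ℝ) := by
        unfold hpoly
        simp only [Nat.cast_prod, Nat.cast_sum]
      rw [apoly, hcast, div_le_div_iff₀ (by positivity)
        (by exact_mod_cast crconst_pos (m+2))]
      have := (Nat.cast_le (α := ℝ)).mpr h
      push_cast at this ⊢
      linarith
    rcases hv with ⟨n, hn0, hvf⟩ | ⟨n, hnl, hvf⟩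
    · -- K at position 0
      have hn1 : 1 ≤ n.val := by
        by_contra hc
        exact hn0 (Fin.ext (by simp only [Fin.val_zero]; omega))
      obtain ⟨t, ht⟩ : ∃ t, n.val = t + 1 := ⟨n.val - 1, by omega⟩
      have htm : t ≤ m := by have := n.isLt; omega
      have hsum : ∀ p ∈ univ.filter (fun p : Fin (m+2) × Fin (m+2) => p.1 ≤ p.2),
          ∑ i ∈ Icc p.1 p.2, v i = f1 K n.val p.1.val p.2.val := by
        intro p _
        rw [sum_icc m v K hK 0 n hn0 hvf p.1 p.2, f1]
        rw [if_congr (show (p.1 ≤ (0:Fin (m+2)) ∧ (0:Fin (m+2)) ≤ p.2) ↔ (p.1.val = 0) by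
              simp only [Fin.le_def, Fin.val_zero]; omega) rfl rfl,
            if_congr (show (p.1 ≤ n ∧ n ≤ p.2) ↔ (p.1.val ≤ n.val ∧ n.val ≤ p.2.val) by
              simp only [Fin.le_def]) rfl rfl]
      rw [Finset.prod_congr rfl hsum, bridge (m+2) (f1 K n.val), ht]
      exact core m K t hK htm
    · -- K at the last position
      have hnm : n.val ≤ m := by
        have h1 := n.isLt
        have h2 : n.val ≠ m+1 := by
          intro h
          exact hnl (Fin.ext (by rw [Fin.val_last]; exact h))
        omega
      have hsum : ∀ p ∈ univ.filter (fun p : Fin (m+2) × Fin (m+2) => p.1 ≤ p.2),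
          ∑ i ∈ Icc p.1 p.2, v i = f2 m K n.val p.1.val p.2.val := by
        intro p _
        rw [sum_icc m v K hK (Fin.last (m+1)) n hnl hvf p.1 p.2, f2]
        rw [if_congr (show (p.1 ≤ Fin.last (m+1) ∧ Fin.last (m+1) ≤ p.2) ↔ (p.2.val = m+1) by
              have h2 := p.2.isLt
              have h1 := p.1.isLt
              simp only [Fin.le_def, Fin.val_last]
              omega) rfl rfl,
            if_congr (show (p.1 ≤ n ∧ n ≤ p.2) ↔ (p.1.val ≤ n.val ∧ n.val ≤ p.2.val) by
              simp only [Fin.le_def]) rfl rfl]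
      rw [Finset.prod_congr rfl hsum, bridge (m+2) (f2 m K n.val)]
      rw [reflect2 (m+2) (f2 m K n.val) (f1 K (m+1-n.val)) (by
        intro ℓ j hle hjr
        rw [f1, f2]
        rw [show m+2-1-j = m+1-j from by omega, show m+2-1-ℓ = m+1-ℓ from by omega]
        rw [show (m+1-ℓ) + 1 - (m+1-j) = j + 1 - ℓ from by omega]
        rw [if_congr (show (m+1-ℓ = m+1) ↔ (ℓ = 0) from by omega) rfl rfl,
          if_congr (show (m+1-j ≤ n.val ∧ n.val ≤ m+1-ℓ)
              ↔ (ℓ ≤ m+1-n.val ∧ m+1-n.val ≤ j) from by omega) rfl rfl])]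
      rw [show m+1-n.val = (m-n.val)+1 from by omega]
      exact core m K (m-n.val) hK (by omega)
  · -- the height bound
    have harith : ∀ nn : ℕ, nn ≤ m + 1 →
        2 / ((m:ℝ)+2) * ((1/2) * (((K:ℝ)-1) * ((m:ℝ)+2)
          + ((nn:ℝ)+1) * (((m:ℝ)+2) - (nn:ℝ)))) ≤ (K:ℝ) + ((m:ℝ)+2) := by
      intro nn hb
      have hb' : (nn:ℝ) ≤ (m:ℝ)+1 := by exact_mod_cast hb
      have hK' : (1:ℝ) ≤ (K:ℝ) := by exact_mod_cast hK
      have hm2 : (0:ℝ) < (m:ℝ)+2 := by positivity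
      rw [div_mul_eq_mul_div, div_le_iff₀ hm2]
      have hnn0 : (0:ℝ) ≤ (nn:ℝ) := Nat.cast_nonneg nn
      nlinarith [sq_nonneg (2*(nn:ℝ) - ((m:ℝ)+1)), sq_nonneg ((m:ℝ)+1)]
    rcases hv with ⟨n, hn0, hvf⟩ | ⟨n, hnl, hvf⟩
    · have hval : Lfun (m+2) (fun i => (v i : ℝ) - 1)
          = (1/2) * (((K:ℝ)-1) * ((m:ℝ)+2) + ((n.val:ℝ)+1) * (((m:ℝ)+2) - (n.val:ℝ))) := by
        rw [Lfun]
        congr 1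
        have hv1 : ∀ j : Fin (m+2), ((v j : ℝ) - 1)
            = ((K:ℝ)-1) * (if j = 0 then 1 else 0) + (if j = n then 1 else 0) := by
          intro j
          rw [hvf j]
          rcases eq_or_ne j 0 with rfl | h0
          · rw [if_pos rfl, if_pos rfl, if_neg (fun h : (0:Fin (m+2)) = n => hn0 h.symm)]
            push_cast
            ring
          · rw [if_neg h0, if_neg h0]
            split_ifs <;> norm_num
        calc ∑ j : Fin (m+2), ((j:ℕ) + 1 : ℝ) * (((m+2:ℕ):ℝ) - (j:ℕ)) * ((v j : ℝ) - 1)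
            = ∑ j : Fin (m+2), (((K:ℝ)-1) * (if j = (0:Fin (m+2)) then ((j:ℕ) + 1 : ℝ) * (((m+2:ℕ):ℝ) - (j:ℕ)) else 0)
                + (if j = n then ((j:ℕ) + 1 : ℝ) * (((m+2:ℕ):ℝ) - (j:ℕ)) else 0)) := by
              refine Finset.sum_congr rfl ?_
              intro j _
              rw [hv1 j]
              split_ifs <;> ring
          _ = ((K:ℝ)-1) * ((m:ℝ)+2) + ((n.val:ℝ)+1) * (((m:ℝ)+2) - (n.val:ℝ)) := by
              rw [Finset.sum_add_distrib, ← Finset.mul_sum,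
                Finset.sum_ite_eq' univ (0 : Fin (m+2)), Finset.sum_ite_eq' univ n]
              simp only [mem_univ, if_true, Fin.val_zero]
              push_cast
              ring
      rw [hval]
      exact harith n.val (by have := n.isLt; omega)
    · have hval : Lfun (m+2) (fun i => (v i : ℝ) - 1)
          = (1/2) * (((K:ℝ)-1) * ((m:ℝ)+2) + ((n.val:ℝ)+1) * (((m:ℝ)+2) - (n.val:ℝ))) := by
        rw [Lfun]
        congr 1
        have hv1 : ∀ j : Fin (m+2), ((v j : ℝ) - 1)
            = ((K:ℝ)-1) * (if j = Fin.last (m+1) then 1 else 0) + (if j = n then 1 else 0) := by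
          intro j
          rw [hvf j]
          rcases eq_or_ne j (Fin.last (m+1)) with rfl | h0
          · rw [if_pos rfl, if_pos rfl, if_neg (fun h : Fin.last (m+1) = n => hnl h.symm)]
            push_cast
            ring
          · rw [if_neg h0, if_neg h0]
            split_ifs <;> norm_num
        calc ∑ j : Fin (m+2), ((j:ℕ) + 1 : ℝ) * (((m+2:ℕ):ℝ) - (j:ℕ)) * ((v j : ℝ) - 1)
            = ∑ j : Fin (m+2), (((K:ℝ)-1) * (if j = Fin.last (m+1) then ((j:ℕ) + 1 : ℝ) * (((m+2:ℕ):ℝ) - (j:ℕ)) else 0)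
                + (if j = n then ((j:ℕ) + 1 : ℝ) * (((m+2:ℕ):ℝ) - (j:ℕ)) else 0)) := by
              refine Finset.sum_congr rfl ?_
              intro j _
              rw [hv1 j]
              split_ifs <;> ring
          _ = ((K:ℝ)-1) * ((m:ℝ)+2) + ((n.val:ℝ)+1) * (((m:ℝ)+2) - (n.val:ℝ)) := by
              rw [Finset.sum_add_distrib, ← Finset.mul_sum,
                Finset.sum_ite_eq' univ (Fin.last (m+1)), Finset.sum_ite_eq' univ n]
              simp only [mem_univ, if_true, Fin.val_last]
              push_cast
              ring
      rw [hval]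
      exact harith n.val (by have := n.isLt; omega)
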